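/- The language { aⁿbⁿ : n ≥ 0 } over the alphabet {a, b} belongs to GCID_S(2; 1, 0, 1; 1, 0, 0), i.e. it is generated by a star-controlled GCID system with two components whose insertion rules insert single symbols with a right context of length at most 1 and whose deletion rules delete single symbols context-freely. -/

import Mathlib

/-!
Graph-controlled insertion-deletion (GCID) systems.

Symbols are drawn from the universal symbol set `ℕ`, strings are lists of
symbols.  A GCID system `Π = (k, V, T, A, H, i0, F, R)` has `k` components;
rules `(i, r, j)` move a string from component `i` to component `j`, where
`r` is an insertion rule `(u, η, v)_I` (rewriting `uv → uηv`) or a deletion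
rule `(u, δ, v)_D` (rewriting `uδv → uv`), with `u, v ∈ V*` and `η, δ ∈ V⁺`.
-/

namespace GCIDPaper

/-- Strings over the universal symbol set `ℕ`. -/
abbrev Word : Type := List ℕ

/-- An insertion rule `(u, s, v)_I` (when `isInsertion = true`) or a deletion
rule `(u, s, v)_D` (when `isInsertion = false`), with left context `lctx = u`,
inserted resp. deleted string `core = s`, and right context `rctx = v`. -/
structure InsDelRule : Type where
  isInsertion : Bool
  lctx : Word
  core : Word
  rctx : Word
  deriving DecidableEq

/-- The insertion rule `(u, η, v)_I`. -/
def insRule (u η v : Word) : InsDelRule := ⟨true, u, η, v⟩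

/-- The deletion rule `(u, δ, v)_D`. -/
def delRule (u δ v : Word) : InsDelRule := ⟨false, u, δ, v⟩

/-- Applying a rule to a string: the insertion rule `(u, η, v)_I` corresponds
to the rewriting `uv → uηv`, the deletion rule `(u, δ, v)_D` to `uδv → uv`. -/
def InsDelRule.Applies (r : InsDelRule) (w w' : Word) : Prop :=
  (r.isInsertion = true →
    ∃ x y, w = x ++ r.lctx ++ r.rctx ++ y ∧
      w' = x ++ r.lctx ++ r.core ++ r.rctx ++ y) ∧
  (r.isInsertion = false →
    ∃ x y, w = x ++ r.lctx ++ r.core ++ r.rctx ++ y ∧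
      w' = x ++ r.lctx ++ r.rctx ++ y)

/-- A graph-controlled insertion-deletion system.  The components are
numbered `1, …, k`; `i0` is the initial component, `F` the set of final
components, `axioms` the finite set of axioms (placed in component `i0`),
and `R` the finite set of rules `(i, r, j)`. -/
structure System : Type where
  k : ℕ
  V : Finset ℕ
  T : Finset ℕ
  axioms : Finset Word
  i0 : ℕ
  F : Finset ℕ
  R : Finset (ℕ × InsDelRule × ℕ)
  k_pos : 1 ≤ k
  T_sub_V : T ⊆ V
  axioms_over_V : ∀ w ∈ axioms, ∀ a ∈ w, a ∈ V
  i0_mem : i0 ∈ Finset.Icc 1 k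
  F_sub : F ⊆ Finset.Icc 1 k
  R_wf : ∀ q ∈ R, q.1 ∈ Finset.Icc 1 k ∧ q.2.2 ∈ Finset.Icc 1 k ∧
    q.2.1.core ≠ [] ∧ (∀ a ∈ q.2.1.lctx, a ∈ V) ∧
    (∀ a ∈ q.2.1.core, a ∈ V) ∧ (∀ a ∈ q.2.1.rctx, a ∈ V)

/-- One derivation step between configurations: `(w)_i ⇒ (w')_j` if some rule
`(i, r, j)` of the system applied to `w` yields `w'`. -/
def Step (S : System) (c c' : Word × ℕ) : Prop :=
  ∃ q ∈ S.R, q.1 = c.2 ∧ q.2.2 = c'.2 ∧ q.2.1.Applies c.1 c'.1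

/-- The reflexive-transitive closure `⇒*` of the step relation. -/
def Derives (S : System) : Word × ℕ → Word × ℕ → Prop :=
  Relation.ReflTransGen (Step S)

/-- The language generated:
`L(Π) = { w ∈ T* : (x)_{i0} ⇒* (w)_{i_f} for some axiom x and some i_f ∈ F }`. -/
def language (S : System) : Set Word :=
  { w | (∀ a ∈ w, a ∈ S.T) ∧
    ∃ x ∈ S.axioms, ∃ f ∈ S.F, Derives S (x, S.i0) (w, f) }

/-- A single rule obeys the size bounds `(n, i', i''; m, j', j'')`. -/
def InsDelRule.SizeLE (r : InsDelRule) (n i' i'' m j' j'' : ℕ) : Prop :=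
  (r.isInsertion = true →
    r.core.length ≤ n ∧ r.lctx.length ≤ i' ∧ r.rctx.length ≤ i'') ∧
  (r.isInsertion = false →
    r.core.length ≤ m ∧ r.lctx.length ≤ j' ∧ r.rctx.length ≤ j'')

/-- The system has size `(k; n, i', i''; m, j', j'')`. -/
def HasSize (S : System) (k n i' i'' m j' j'' : ℕ) : Prop :=
  S.k = k ∧ ∀ q ∈ S.R, q.2.1.SizeLE n i' i'' m j' j''

/-- Star-controlled: the underlying undirected control graph (with an edge
`{Ci, Cj}` whenever there is a rule `(i, r, j)`) has exactly the edge set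
`{ {C1, Ci} : 2 ≤ i ≤ k }`; in particular there are no loops. -/
def StarControlled (S : System) : Prop :=
  (∀ q ∈ S.R, ∃ i ∈ Finset.Icc 2 S.k, ({q.1, q.2.2} : Finset ℕ) = {1, i}) ∧
  (∀ i ∈ Finset.Icc 2 S.k, ∃ q ∈ S.R, ({q.1, q.2.2} : Finset ℕ) = {1, i})

/-- The class `GCID(k; n, i', i''; m, j', j'')` of languages generated by GCID
systems of the given size. -/
def GCIDClass (k n i' i'' m j' j'' : ℕ) : Set (Set Word) :=
  { L | ∃ S : System, HasSize S k n i' i'' m j' j'' ∧ language S = L }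

/-- The class `GCID_S(k; n, i', i''; m, j', j'')` of languages generated by
star-controlled GCID systems of the given size. -/
def GCID_S (k n i' i'' m j' j'' : ℕ) : Set (Set Word) :=
  { L | ∃ S : System, StarControlled S ∧ HasSize S k n i' i'' m j' j'' ∧
    language S = L }

/-! ### Auxiliary construction -/

/-- The concrete star-controlled GCID system generating `{aⁿbⁿ}`.
Symbols: `a = 0`, `b = 1`, markers `A = 2`, `B = 3`. -/
def mySys : System where
  k := 2
  V := {0, 1, 2, 3}
  T := {0, 1}
  axioms := {[2, 3]}
  i0 := 1
  F := {1}
  R := {(1, insRule [] [0] [2], 2), (1, delRule [] [2] [], 2),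
        (2, insRule [] [1] [3], 1), (2, delRule [] [3] [], 1)}
  k_pos := by norm_num
  T_sub_V := by decide
  axioms_over_V := by decide
  i0_mem := by decide
  F_sub := by decide
  R_wf := by decide

/-- Unique splitting at a symbol occurring in neither surrounding part. -/
lemma crack {c : ℕ} : ∀ (p : Word) {x t y : Word}, c ∉ p → c ∉ t →
    p ++ c :: t = x ++ c :: y → x = p ∧ y = t := by
  intro p
  induction p with
  | nil =>
    intro x t y _ ht h
    cases x with
    | nil =>
      simp only [List.nil_append, List.cons.injEq, true_and] at h
      exact ⟨rfl, h.symm⟩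
    | cons d x' =>
      rw [List.nil_append, List.cons_append] at h
      obtain ⟨h1, h2⟩ := List.cons.inj h
      exact absurd (by simp [h2]) ht
  | cons a p' ih =>
    intro x t y hp ht h
    cases x with
    | nil =>
      rw [List.cons_append, List.nil_append] at h
      obtain ⟨h1, _⟩ := List.cons.inj h
      exact absurd (by simp [h1]) hp
    | cons d x' =>
      rw [List.cons_append, List.cons_append] at h
      obtain ⟨h1, h2⟩ := List.cons.inj h
      obtain ⟨hx, hy⟩ := ih (fun hm => hp (List.mem_cons_of_mem _ hm)) ht h2
      exact ⟨by rw [hx, h1], hy⟩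

/-- Invariant of reachable configurations of `mySys`. -/
def Inv (c : Word × ℕ) : Prop :=
  (∃ m, c = (List.replicate m 0 ++ 2 :: (List.replicate m 1 ++ [3]), 1)) ∨
  (∃ m, c = (List.replicate (m+1) 0 ++ 2 :: (List.replicate m 1 ++ [3]), 2)) ∨
  (∃ m, c = (List.replicate m 0 ++ (List.replicate m 1 ++ [3]), 2)) ∨
  (∃ m, c = (List.replicate m 0 ++ (List.replicate (m+1) 1 ++ [3]), 1)) ∨
  (∃ m, c = (List.replicate (m+1) 0 ++ 2 :: List.replicate m 1, 1)) ∨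
  (∃ m, c = (List.replicate (m+2) 0 ++ 2 :: List.replicate m 1, 2)) ∨
  (∃ m, c = (List.replicate m 0 ++ List.replicate m 1, 1)) ∨
  (∃ m, c = (List.replicate (m+1) 0 ++ List.replicate m 1, 2))

lemma inv_step {c c' : Word × ℕ} (hc : Inv c) (h : Step mySys c c') : Inv c' := by
  obtain ⟨q, hq, hq1, hq2, happ⟩ := h
  obtain ⟨w, i⟩ := c
  obtain ⟨w', i'⟩ := c'
  simp only [mySys, Finset.mem_insert, Finset.mem_singleton] at hq
  simp only at hq1 hq2
  rcases hq with rfl | rfl | rfl | rfl <;>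
    simp only [insRule, delRule] at hq1 hq2 happ <;> subst hq1 <;> subst hq2
  · -- rule (1, ins [] [0] [2], 2)
    obtain ⟨x, y, hw, hw'⟩ := happ.1 rfl
    simp only [List.append_nil, List.append_assoc, List.singleton_append,
      List.nil_append] at hw hw'
    rcases hc with ⟨m, hm⟩ | ⟨m, hm⟩ | ⟨m, hm⟩ | ⟨m, hm⟩ | ⟨m, hm⟩ | ⟨m, hm⟩ |
      ⟨m, hm⟩ | ⟨m, hm⟩ <;>
      obtain ⟨hmw, hmi⟩ := Prod.mk.injEq .. ▸ hm <;>
      (try (exfalso; omega)) <;> subst hmw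
    · -- S1(m)
      obtain ⟨rfl, rfl⟩ := crack _ (by simp [List.mem_replicate])
        (by simp [List.mem_replicate]) hw
      refine Or.inr (Or.inl ⟨m, ?_⟩)
      simp [hw', List.replicate_succ' (n := m)]
    · -- T1'(m): no 2 in the word
      exfalso
      have h2 : (2 : ℕ) ∈ x ++ 2 :: y := by simp
      rw [← hw] at h2
      simp [List.mem_replicate] at h2
    · -- U1(m)
      obtain ⟨rfl, rfl⟩ := crack _ (by simp [List.mem_replicate])
        (by simp [List.mem_replicate]) hw
      refine Or.inr (Or.inr (Or.inr (Or.inr (Or.inr (Or.inl ⟨m, ?_⟩)))))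
      simp [hw', List.replicate_succ' (n := m + 1)]
    · -- final(m): no 2 in the word
      exfalso
      have h2 : (2 : ℕ) ∈ x ++ 2 :: y := by simp
      rw [← hw] at h2
      simp [List.mem_replicate] at h2
  · -- rule (1, del [] [2] [], 2)
    obtain ⟨x, y, hw, hw'⟩ := happ.2 rfl
    simp only [List.append_nil, List.append_assoc, List.singleton_append,
      List.nil_append] at hw hw'
    rcases hc with ⟨m, hm⟩ | ⟨m, hm⟩ | ⟨m, hm⟩ | ⟨m, hm⟩ | ⟨m, hm⟩ | ⟨m, hm⟩ |
      ⟨m, hm⟩ | ⟨m, hm⟩ <;>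
      obtain ⟨hmw, hmi⟩ := Prod.mk.injEq .. ▸ hm <;>
      (try (exfalso; omega)) <;> subst hmw
    · -- S1(m) ⇒ T2(m)
      obtain ⟨rfl, rfl⟩ := crack _ (by simp [List.mem_replicate])
        (by simp [List.mem_replicate]) hw
      exact Or.inr (Or.inr (Or.inl ⟨m, by simp [hw']⟩))
    · exfalso
      have h2 : (2 : ℕ) ∈ x ++ 2 :: y := by simp
      rw [← hw] at h2
      simp [List.mem_replicate] at h2
    · -- U1(m) ⇒ last(m)
      obtain ⟨rfl, rfl⟩ := crack _ (by simp [List.mem_replicate])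
        (by simp [List.mem_replicate]) hw
      exact Or.inr (Or.inr (Or.inr (Or.inr (Or.inr (Or.inr
        (Or.inr ⟨m, by simp [hw']⟩))))))
    · exfalso
      have h2 : (2 : ℕ) ∈ x ++ 2 :: y := by simp
      rw [← hw] at h2
      simp [List.mem_replicate] at h2
  · -- rule (2, ins [] [1] [3], 1)
    obtain ⟨x, y, hw, hw'⟩ := happ.1 rfl
    simp only [List.append_nil, List.append_assoc, List.singleton_append,
      List.nil_append] at hw hw'
    rcases hc with ⟨m, hm⟩ | ⟨m, hm⟩ | ⟨m, hm⟩ | ⟨m, hm⟩ | ⟨m, hm⟩ | ⟨m, hm⟩ |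
      ⟨m, hm⟩ | ⟨m, hm⟩ <;>
      obtain ⟨hmw, hmi⟩ := Prod.mk.injEq .. ▸ hm <;>
      (try (exfalso; omega)) <;> subst hmw
    · -- S2(m) ⇒ S1(m+1)
      rw [show List.replicate (m+1) 0 ++ 2 :: (List.replicate m 1 ++ [3])
          = (List.replicate (m+1) 0 ++ 2 :: List.replicate m 1) ++ 3 :: ([] : Word)
          from by simp] at hw
      obtain ⟨rfl, rfl⟩ := crack _ (by simp [List.mem_replicate]) (by simp) hw
      refine Or.inl ⟨m + 1, ?_⟩
      simp [hw', List.replicate_succ' (n := m)]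
    · -- T2(m) ⇒ T1'(m)
      rw [show List.replicate m 0 ++ (List.replicate m 1 ++ [3])
          = (List.replicate m 0 ++ List.replicate m 1) ++ 3 :: ([] : Word)
          from by simp] at hw
      obtain ⟨rfl, rfl⟩ := crack _ (by simp [List.mem_replicate]) (by simp) hw
      refine Or.inr (Or.inr (Or.inr (Or.inl ⟨m, ?_⟩)))
      simp [hw', List.replicate_succ' (n := m)]
    · -- U2(m): no 3
      exfalso
      have h3 : (3 : ℕ) ∈ x ++ 3 :: y := by simp
      rw [← hw] at h3
      simp [List.mem_replicate] at h3
    · exfalso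
      have h3 : (3 : ℕ) ∈ x ++ 3 :: y := by simp
      rw [← hw] at h3
      simp [List.mem_replicate] at h3
  · -- rule (2, del [] [3] [], 1)
    obtain ⟨x, y, hw, hw'⟩ := happ.2 rfl
    simp only [List.append_nil, List.append_assoc, List.singleton_append,
      List.nil_append] at hw hw'
    rcases hc with ⟨m, hm⟩ | ⟨m, hm⟩ | ⟨m, hm⟩ | ⟨m, hm⟩ | ⟨m, hm⟩ | ⟨m, hm⟩ |
      ⟨m, hm⟩ | ⟨m, hm⟩ <;>
      obtain ⟨hmw, hmi⟩ := Prod.mk.injEq .. ▸ hm <;>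
      (try (exfalso; omega)) <;> subst hmw
    · -- S2(m) ⇒ U1(m)
      rw [show List.replicate (m+1) 0 ++ 2 :: (List.replicate m 1 ++ [3])
          = (List.replicate (m+1) 0 ++ 2 :: List.replicate m 1) ++ 3 :: ([] : Word)
          from by simp] at hw
      obtain ⟨rfl, rfl⟩ := crack _ (by simp [List.mem_replicate]) (by simp) hw
      exact Or.inr (Or.inr (Or.inr (Or.inr (Or.inl ⟨m, by simp [hw']⟩))))
    · -- T2(m) ⇒ final(m)
      rw [show List.replicate m 0 ++ (List.replicate m 1 ++ [3])
          = (List.replicate m 0 ++ List.replicate m 1) ++ 3 :: ([] : Word)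
          from by simp] at hw
      obtain ⟨rfl, rfl⟩ := crack _ (by simp [List.mem_replicate]) (by simp) hw
      exact Or.inr (Or.inr (Or.inr (Or.inr (Or.inr (Or.inr
        (Or.inl ⟨m, by simp [hw']⟩))))))
    · exfalso
      have h3 : (3 : ℕ) ∈ x ++ 3 :: y := by simp
      rw [← hw] at h3
      simp [List.mem_replicate] at h3
    · exfalso
      have h3 : (3 : ℕ) ∈ x ++ 3 :: y := by simp
      rw [← hw] at h3
      simp [List.mem_replicate] at h3

lemma inv_derives {c c' : Word × ℕ} (hc : Inv c) (h : Derives mySys c c') :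
    Inv c' := by
  induction h with
  | refl => exact hc
  | tail _ hstep ih => exact inv_step ih hstep

lemma derive_loop (n : ℕ) :
    Derives mySys ([2, 3], 1)
      (List.replicate n 0 ++ 2 :: (List.replicate n 1 ++ [3]), 1) := by
  induction n with
  | zero => exact Relation.ReflTransGen.refl
  | succ n ih =>
    have s1 : Step mySys
        (List.replicate n 0 ++ 2 :: (List.replicate n 1 ++ [3]), 1)
        (List.replicate (n+1) 0 ++ 2 :: (List.replicate n 1 ++ [3]), 2) := by
      refine ⟨(1, insRule [] [0] [2], 2), by simp [mySys], rfl, rfl, ?_, ?_⟩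
      · intro _
        refine ⟨List.replicate n 0, List.replicate n 1 ++ [3], by simp [insRule], ?_⟩
        simp [insRule, List.replicate_succ' (n := n)]
      · intro h; simp [insRule] at h
    have s2 : Step mySys
        (List.replicate (n+1) 0 ++ 2 :: (List.replicate n 1 ++ [3]), 2)
        (List.replicate (n+1) 0 ++ 2 :: (List.replicate (n+1) 1 ++ [3]), 1) := by
      refine ⟨(2, insRule [] [1] [3], 1), by simp [mySys], rfl, rfl, ?_, ?_⟩
      · intro _
        refine ⟨List.replicate (n+1) 0 ++ 2 :: List.replicate n 1, [],
          by simp [insRule], ?_⟩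
        simp [insRule, List.replicate_succ' (n := n)]
      · intro h; simp [insRule] at h
    exact (ih.tail s1).tail s2

lemma derive_final (n : ℕ) :
    Derives mySys ([2, 3], 1)
      (List.replicate n 0 ++ List.replicate n 1, 1) := by
  have s1 : Step mySys
      (List.replicate n 0 ++ 2 :: (List.replicate n 1 ++ [3]), 1)
      (List.replicate n 0 ++ (List.replicate n 1 ++ [3]), 2) := by
    refine ⟨(1, delRule [] [2] [], 2), by simp [mySys], rfl, rfl, ?_, ?_⟩
    · intro h; simp [delRule] at h
    · intro _
      exact ⟨List.replicate n 0, List.replicate n 1 ++ [3], by simp [delRule], by simp [delRule]⟩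
  have s2 : Step mySys
      (List.replicate n 0 ++ (List.replicate n 1 ++ [3]), 2)
      (List.replicate n 0 ++ List.replicate n 1, 1) := by
    refine ⟨(2, delRule [] [3] [], 1), by simp [mySys], rfl, rfl, ?_, ?_⟩
    · intro h; simp [delRule] at h
    · intro _
      exact ⟨List.replicate n 0 ++ List.replicate n 1, [], by simp [delRule], by simp [delRule]⟩
  exact ((derive_loop n).tail s1).tail s2

lemma mySys_lang :
    language mySys =
      { w : Word | ∃ n : ℕ, w = List.replicate n 0 ++ List.replicate n 1 } := by
  ext w
  constructor
  · rintro ⟨hT, x, hx, f, hf, hder⟩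
    simp only [mySys, Finset.mem_singleton] at hx hf
    subst hx; subst hf
    have hi0 : mySys.i0 = 1 := rfl
    rw [hi0] at hder
    have hinv : Inv (w, 1) := inv_derives (Or.inl ⟨0, by simp⟩) hder
    have hT2 : (2 : ℕ) ∉ w := fun h => by simpa [mySys] using hT 2 h
    have hT3 : (3 : ℕ) ∉ w := fun h => by simpa [mySys] using hT 3 h
    rcases hinv with ⟨m, hm⟩ | ⟨m, hm⟩ | ⟨m, hm⟩ | ⟨m, hm⟩ | ⟨m, hm⟩ | ⟨m, hm⟩ |
      ⟨m, hm⟩ | ⟨m, hm⟩ <;>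
      obtain ⟨hmw, hmi⟩ := Prod.mk.injEq .. ▸ hm <;>
      (try (exfalso; omega))
    · exact absurd (by simp [hmw]) hT2
    · exact absurd (by simp [hmw]) hT3
    · exact absurd (by simp [hmw]) hT2
    · exact ⟨m, hmw⟩
  · rintro ⟨n, rfl⟩
    refine ⟨?_, [2, 3], by simp [mySys], 1, by simp [mySys], derive_final n⟩
    intro a ha
    simp only [List.mem_append, List.mem_replicate] at ha
    rcases ha with ⟨_, rfl⟩ | ⟨_, rfl⟩ <;> simp [mySys]

/-- The language `{ aⁿbⁿ : n ≥ 0 }` over the two-letter alphabet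
`{a, b}` (encoded as `a = 0`, `b = 1`) belongs to
`GCID_S(2; 1, 0, 1; 1, 0, 0)`: it is generated by a star-controlled GCID
system with two components whose insertion rules insert single symbols with a
right context of length at most 1 and whose deletion rules delete single
symbols context-freely. -/
theorem anbn_mem_gcid_s_2_101_100 :
    { w : Word | ∃ n : ℕ, w = List.replicate n 0 ++ List.replicate n 1 } ∈
      GCID_S 2 1 0 1 1 0 0 := by
  refine ⟨mySys, ⟨?_, ?_⟩, ⟨rfl, ?_⟩, mySys_lang⟩
  · decide
  · decide
  · intro q hq
    simp only [mySys, Finset.mem_insert, Finset.mem_singleton] at hq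
    rcases hq with rfl | rfl | rfl | rfl <;>
      simp [InsDelRule.SizeLE, insRule, delRule]

end GCIDPaper
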